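/- (Dedekind's group determinant factorization for abelian groups) Let G be a finite abelian group and let a : G → ℂ be any function. Consider the G×G complex matrix M with entries M_{g,h} = a(g·h⁻¹). Then det(M) = ∏_χ ( ∑_{g ∈ G} χ(g)·a(g) ), where the product runs over all characters χ of G, i.e. all group homomorphisms χ : G → ℂˣ. -/

import Mathlib

open Finset

/-- The monoid-hom characters `G →* ℂˣ` of a group are the same as additive characters of
`Additive G` with values in `ℂ`. -/
noncomputable def dedekindCharEquiv (G : Type*) [CommGroup G] :
    (G →* ℂˣ) ≃ AddChar (Additive G) ℂ where
  toFun χ :=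
    { toFun := fun g => (χ g.toMul : ℂ)
      map_zero_eq_one' := by simp
      map_add_eq_mul' := fun x y => by
        simp only [toMul_add, map_mul, Units.val_mul] }
  invFun ψ :=
    { toFun := fun g =>
        Units.mk (ψ (Additive.ofMul g)) (ψ (Additive.ofMul g⁻¹))
          (by rw [← AddChar.map_add_eq_mul]; simp)
          (by rw [← AddChar.map_add_eq_mul]; simp)
      map_one' := by ext; simp
      map_mul' := fun x y => by
        ext
        simp only [Units.val_mul]
        rw [← AddChar.map_add_eq_mul, ← ofMul_mul] }
  left_inv χ := by ext g; rfl
  right_inv ψ := by ext g; rfl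

theorem dedekindCharEquiv_apply {G : Type*} [CommGroup G] (χ : G →* ℂˣ) (g : G) :
    dedekindCharEquiv G χ (Additive.ofMul g) = (χ g : ℂ) := rfl

/-- Dedekind's factorization of the group determinant of a finite abelian group: for any
function `a : G → ℂ`, the determinant of the matrix `(a(g·h⁻¹))_{g,h}` is the product, over
all characters `χ : G →* ℂˣ`, of `∑_{g ∈ G} χ(g)·a(g)`. -/
theorem dedekind_group_determinant (G : Type*) [CommGroup G] [Fintype G] [DecidableEq G]
    (a : G → ℂ) :
    (Matrix.of fun g h : G => a (g * h⁻¹)).det =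
      ∏ᶠ χ : G →* ℂˣ, ∑ g : G, (χ g : ℂ) * a g := by
  classical
  haveI : Fintype (G →* ℂˣ) := Fintype.ofEquiv _ (dedekindCharEquiv G).symm
  have hcard : Fintype.card (G →* ℂˣ) = Fintype.card G := by
    rw [Fintype.card_congr (dedekindCharEquiv G), AddChar.card_eq]
    exact Fintype.card_congr Additive.toMul
  -- the family of characters as functions `G → ℂ`
  set w : (G →* ℂˣ) → G → ℂ := fun χ g => (χ g : ℂ) with hw
  have li : LinearIndependent ℂ w := by
    have h := (AddChar.linearIndependent (Additive G) ℂ).comp _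
      (dedekindCharEquiv G).injective
    exact h
  -- build a basis of `G → ℂ` from the characters
  let b : Module.Basis (G →* ℂˣ) ℂ (G → ℂ) :=
    basisOfLinearIndependentOfCardEqFinrank li
      (by rw [hcard, Module.finrank_fintype_fun_eq_card])
  have hb : ⇑b = w := coe_basisOfLinearIndependentOfCardEqFinrank _ _
  let eG : (G →* ℂˣ) ≃ G := Fintype.equivOfCardEq hcard
  let c : Module.Basis G ℂ (G → ℂ) := b.reindex eG
  let U : Matrix G G ℂ := (Pi.basisFun ℂ G).toMatrix ⇑c
  haveI : Invertible U := (Pi.basisFun ℂ G).invertibleToMatrix c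
  have hU : ∀ g h : G, U g h = ((eG.symm h) g : ℂ) := by
    intro g h
    show (Pi.basisFun ℂ G).toMatrix ⇑c g h = _
    rw [Module.Basis.toMatrix_apply, Pi.basisFun_repr, Module.Basis.reindex_apply, hb]
  -- eigenvalues
  set μ : G → ℂ := fun h => ∑ k : G, a k * (((eG.symm h) k : ℂ))⁻¹ with hμ
  have key : (Matrix.of fun g h : G => a (g * h⁻¹)) * U = U * Matrix.diagonal μ := by
    ext g h
    rw [Matrix.mul_apply, Matrix.mul_diagonal, hU, hμ, Finset.mul_sum]
    refine (Fintype.sum_equiv ((Equiv.inv G).trans (Equiv.mulLeft g)) _ _ fun k => ?_).symm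
    have hek : ((Equiv.inv G).trans (Equiv.mulLeft g)) k = g * k⁻¹ := rfl
    rw [hek, hU, Matrix.of_apply]
    have h1 : g * (g * k⁻¹)⁻¹ = k := by
      rw [mul_inv_rev, inv_inv, mul_comm k g⁻¹, mul_inv_cancel_left]
    have h2 : ((eG.symm h) (g * k⁻¹) : ℂ) = ((eG.symm h) g : ℂ) * (((eG.symm h) k : ℂ))⁻¹ := by
      rw [map_mul, map_inv, Units.val_mul, Units.val_inv_eq_inv_val]
    rw [h1, h2]
    ring
  have hdet := congrArg Matrix.det key
  rw [Matrix.det_mul, Matrix.det_mul, Matrix.det_diagonal, mul_comm U.det] at hdet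
  have hUdet : U.det ≠ 0 := U.isUnit_det_of_invertible.ne_zero
  have hM : (Matrix.of fun g h : G => a (g * h⁻¹)).det = ∏ h : G, μ h :=
    mul_right_cancel₀ hUdet hdet
  rw [hM, finprod_eq_prod_of_fintype]
  calc ∏ h : G, μ h
      = ∏ χ : G →* ℂˣ, ∑ k : G, a k * ((χ k : ℂ))⁻¹ :=
        Fintype.prod_equiv eG.symm _ _ (fun h => rfl)
    _ = ∏ χ : G →* ℂˣ, ∑ g : G, (χ g : ℂ) * a g := by
        refine Fintype.prod_equiv (Equiv.inv (G →* ℂˣ)) _ _ fun χ => ?_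
        refine Finset.sum_congr rfl fun k _ => ?_
        simp only [Equiv.inv_apply, MonoidHom.inv_apply, Units.val_inv_eq_inv_val, inv_inv]
        exact mul_comm _ _
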